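/- In the setting of a (P2+P3, complement-of-(P2+P3))-free graph G with induced 5-cycle C on v1,...,v5, for every i in {1,...,5} the edges between V_{i,i+2} and V_emptyset form a matching: every vertex of V_{i,i+2} has at most one neighbour in V_emptyset, and every vertex of V_emptyset has at most one neighbour in V_{i,i+2}. -/

import Mathlib

/-- `G` contains no induced subgraph isomorphic to `H`. -/
def InducedFree {α V : Type*} (G : SimpleGraph V) (H : SimpleGraph α) : Prop :=
  ∀ f : α ↪ V, ¬ (∀ a b : α, H.Adj a b ↔ G.Adj (f a) (f b))

/-- `P₂ + P₃`: the disjoint union of a 2-vertex path and a 3-vertex path. -/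
def P2PlusP3 : SimpleGraph (Fin 5) :=
  SimpleGraph.fromRel fun a b => (a = 0 ∧ b = 1) ∨ (a = 2 ∧ b = 3) ∨ (a = 3 ∧ b = 4)

/-- `VS G v S`: the vertices outside the 5-cycle `v 0, …, v 4` whose
neighbourhood on the cycle is exactly `{v i : i ∈ S}`. -/
def VS {V : Type*} (G : SimpleGraph V) (v : ZMod 5 → V) (S : Set (ZMod 5)) : Set V :=
  {x | (∀ i, x ≠ v i) ∧ ∀ i, G.Adj x (v i) ↔ i ∈ S}

lemma free5 {V : Type*} (G : SimpleGraph V) (h : InducedFree G P2PlusP3)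
    (a b c d e : V)
    (hab : G.Adj a b) (hcd : G.Adj c d) (hde : G.Adj d e)
    (hce : ¬ G.Adj c e) (hcene : c ≠ e)
    (hac : ¬ G.Adj a c) (had : ¬ G.Adj a d) (hae : ¬ G.Adj a e)
    (hbc : ¬ G.Adj b c) (hbd : ¬ G.Adj b d) (hbe : ¬ G.Adj b e) : False := by
  have hab' : a ≠ b := hab.ne
  have hcd' : c ≠ d := hcd.ne
  have hde' : d ≠ e := hde.ne
  have h1 : a ≠ c := fun h => had (h ▸ hcd)
  have h2 : a ≠ d := fun h => hac (h ▸ hcd.symm)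
  have h3 : a ≠ e := fun h => had (h ▸ hde).symm
  have h4 : b ≠ c := fun h => hbd (h ▸ hcd)
  have h5 : b ≠ d := fun h => hbe (h ▸ hde)
  have h6 : b ≠ e := fun h => hbd (h ▸ hde).symm
  have hca := fun h => hac (G.adj_symm h)
  have hda := fun h => had (G.adj_symm h)
  have hea := fun h => hae (G.adj_symm h)
  have hcb := fun h => hbc (G.adj_symm h)
  have hdb := fun h => hbd (G.adj_symm h)
  have heb := fun h => hbe (G.adj_symm h)
  have hec := fun h => hce (G.adj_symm h)
  refine h ⟨![a,b,c,d,e], ?_⟩ ?_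
  · intro i j hij
    fin_cases i <;> fin_cases j <;> simp_all
  · intro p q
    fin_cases p <;> fin_cases q <;>
      simp [P2PlusP3, SimpleGraph.fromRel_adj] <;>
      first
        | assumption
        | exact hab.symm
        | exact hcd.symm
        | exact hde.symm

/-- For each `i`, the edges between `V_{i,i+2}` and `V_∅` form a matching:
each vertex of one set has at most one neighbour in the other. -/
theorem stmt_16 {V : Type*} [Fintype V] (G : SimpleGraph V)
    (hG : InducedFree G P2PlusP3) (hGc : InducedFree Gᶜ P2PlusP3)
    (v : ZMod 5 → V) (hv : Function.Injective v)
    (hC : ∀ i j : ZMod 5, G.Adj (v i) (v j) ↔ j = i + 1 ∨ j = i - 1) :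
    ∀ i : ZMod 5,
      (∀ x ∈ VS G v {i, i + 2}, ∀ y ∈ VS G v (∅ : Set (ZMod 5)),
        ∀ y' ∈ VS G v (∅ : Set (ZMod 5)), G.Adj x y → G.Adj x y' → y = y') ∧
      (∀ y ∈ VS G v (∅ : Set (ZMod 5)), ∀ x ∈ VS G v {i, i + 2},
        ∀ x' ∈ VS G v {i, i + 2}, G.Adj y x → G.Adj y x' → x = x') := by
  intro i
  -- ZMod 5 arithmetic facts
  have z34 : ∀ j : ZMod 5, j + 4 = (j + 3) + 1 := by decide
  have z40 : ∀ j : ZMod 5, j = (j + 4) + 1 := by decide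
  have z30 : ∀ j : ZMod 5, ¬ (j = (j + 3) + 1 ∨ j = (j + 3) - 1) := by decide
  have z3ne : ∀ j : ZMod 5, j + 3 ≠ j := by decide
  have zx3 : ∀ j : ZMod 5, ¬ (j + 3 = j ∨ j + 3 = j + 2) := by decide
  have zx4 : ∀ j : ZMod 5, ¬ (j + 4 = j ∨ j + 4 = j + 2) := by decide
  have zx1 : ∀ j : ZMod 5, ¬ (j + 1 = j ∨ j + 1 = j + 2) := by decide
  have z02 : ∀ j : ZMod 5, ¬ (j + 2 = j + 1 ∨ j + 2 = j - 1) := by decide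
  have z2ne : ∀ j : ZMod 5, j ≠ j + 2 := by decide
  have z01 : ∀ j : ZMod 5, j + 1 = j + 1 ∨ j + 1 = j - 1 := by decide
  have z21 : ∀ j : ZMod 5, j + 1 = (j + 2) + 1 ∨ j + 1 = (j + 2) - 1 := by decide
  -- adjacency helpers for VS members
  have adj2 : ∀ x, x ∈ VS G v {i, i + 2} → ∀ j, G.Adj x (v j) ↔ (j = i ∨ j = i + 2) := by
    intro x hx j
    exact (hx.2 j).trans (by simp)
  have adj0 : ∀ y, y ∈ VS G v (∅ : Set (ZMod 5)) → ∀ j, ¬ G.Adj y (v j) := by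
    intro y hy j h
    exact ((hy.2 j).mp h)
  constructor
  · intro x hx y hy y' hy' hxy hxy'
    by_contra hne
    by_cases hyy' : G.Adj y y'
    · -- P2 = {y, y'}, P3 = v(i+3) - v(i+4) - v i
      exact free5 G hG y y' (v (i+3)) (v (i+4)) (v i)
        hyy'
        ((hC (i+3) (i+4)).mpr (Or.inl (z34 i)))
        ((hC (i+4) i).mpr (Or.inl (z40 i)))
        (fun h => z30 i ((hC (i+3) i).mp h))
        (fun h => z3ne i (hv h))
        (adj0 y hy (i+3)) (adj0 y hy (i+4)) (adj0 y hy i)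
        (adj0 y' hy' (i+3)) (adj0 y' hy' (i+4)) (adj0 y' hy' i)
    · -- P2 = {v(i+3), v(i+4)}, P3 = y - x - y'
      exact free5 G hG (v (i+3)) (v (i+4)) y x y'
        ((hC (i+3) (i+4)).mpr (Or.inl (z34 i)))
        hxy.symm hxy' hyy' hne
        (fun h => adj0 y hy (i+3) (G.adj_symm h))
        (fun h => zx3 i ((adj2 x hx (i+3)).mp (G.adj_symm h)))
        (fun h => adj0 y' hy' (i+3) (G.adj_symm h))
        (fun h => adj0 y hy (i+4) (G.adj_symm h))
        (fun h => zx4 i ((adj2 x hx (i+4)).mp (G.adj_symm h)))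
        (fun h => adj0 y' hy' (i+4) (G.adj_symm h))
  · intro y hy x hx x' hx' hyx hyx'
    by_contra hne
    by_cases hxx' : G.Adj x x'
    · -- complement: P2 = {v i, v(i+2)}, P3 = x - v(i+1) - x' in Gᶜ
      refine free5 Gᶜ hGc (v i) (v (i+2)) x (v (i+1)) x'
        ?_ ?_ ?_ ?_ hne ?_ ?_ ?_ ?_ ?_ ?_ <;>
        simp only [SimpleGraph.compl_adj, not_and, not_not]
      · exact ⟨fun h => z2ne i (hv h), fun h => z02 i ((hC i (i+2)).mp h)⟩
      · exact ⟨fun h => hx.1 (i+1) h, fun h => zx1 i ((adj2 x hx (i+1)).mp h)⟩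
      · exact ⟨fun h => hx'.1 (i+1) h.symm,
          fun h => zx1 i ((adj2 x' hx' (i+1)).mp (G.adj_symm h))⟩
      · exact fun _ => hxx'
      · exact fun _ => G.adj_symm ((adj2 x hx i).mpr (Or.inl rfl))
      · exact fun _ => (hC i (i+1)).mpr (z01 i)
      · exact fun _ => G.adj_symm ((adj2 x' hx' i).mpr (Or.inl rfl))
      · exact fun _ => G.adj_symm ((adj2 x hx (i+2)).mpr (Or.inr rfl))
      · exact fun _ => (hC (i+2) (i+1)).mpr (z21 i)
      · exact fun _ => G.adj_symm ((adj2 x' hx' (i+2)).mpr (Or.inr rfl))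
    · -- P2 = {v(i+3), v(i+4)}, P3 = x - y - x'
      exact free5 G hG (v (i+3)) (v (i+4)) x y x'
        ((hC (i+3) (i+4)).mpr (Or.inl (z34 i)))
        hyx.symm hyx' hxx' hne
        (fun h => zx3 i ((adj2 x hx (i+3)).mp (G.adj_symm h)))
        (fun h => adj0 y hy (i+3) (G.adj_symm h))
        (fun h => zx3 i ((adj2 x' hx' (i+3)).mp (G.adj_symm h)))
        (fun h => zx4 i ((adj2 x hx (i+4)).mp (G.adj_symm h)))
        (fun h => adj0 y hy (i+4) (G.adj_symm h))
        (fun h => zx4 i ((adj2 x' hx' (i+4)).mp (G.adj_symm h)))
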